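/- arXiv:1803.04280 — 2 statements merged into one kernel-verified Lean document; each statement's English description precedes it below -/
import Mathlib

section
/- Let q ≥ 2 be an integer. Then for every integer a ≥ 1, u_q(aq − 1) = q·u_q(a−1) + q·(a−1)·a/2. -/
/-- `vq q n` is the `q`-adic valuation: `0` if `n = 0`, and otherwise the
largest `k` such that `q ^ k` divides `n`. -/
noncomputable def vq (q n : ℕ) : ℕ := if n = 0 then 0 else sSup {k : ℕ | q ^ k ∣ n}

/-- `wq q n = ∑_{i=0}^n vq q i`. -/
noncomputable def wq (q n : ℕ) : ℕ := ∑ i ∈ Finset.range (n + 1), vq q i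

/-- `uq q n = ∑_{i=0}^n wq q i`. -/
noncomputable def uq (q n : ℕ) : ℕ := ∑ i ∈ Finset.range (n + 1), wq q i

lemma vq_bdd {q n : ℕ} (hq : 2 ≤ q) (hn : n ≠ 0) : BddAbove {k : ℕ | q ^ k ∣ n} := by
  refine ⟨n, fun k hk => ?_⟩
  have h1 : q ^ k ≤ n := Nat.le_of_dvd (Nat.pos_of_ne_zero hn) hk
  have h2 : k < 2 ^ k := Nat.lt_two_pow_self
  have h3 : 2 ^ k ≤ q ^ k := Nat.pow_le_pow_left hq k
  omega

lemma vq_dvd {q n : ℕ} (hq : 2 ≤ q) : q ^ vq q n ∣ n := by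
  rcases eq_or_ne n 0 with rfl | hn
  · simp
  · have h : sSup {k : ℕ | q ^ k ∣ n} ∈ {k : ℕ | q ^ k ∣ n} :=
      Nat.sSup_mem ⟨0, by simp⟩ (vq_bdd hq hn)
    simpa [vq, hn] using h

lemma le_vq {q n k : ℕ} (hq : 2 ≤ q) (hn : n ≠ 0) (h : q ^ k ∣ n) : k ≤ vq q n := by
  rw [vq, if_neg hn]
  exact le_csSup (vq_bdd hq hn) h

lemma vq_eq_zero_of_not_dvd {q n : ℕ} (hq : 2 ≤ q) (h : ¬ q ∣ n) : vq q n = 0 := by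
  by_contra h0
  have h1 : q ^ 1 ∣ n := dvd_trans (pow_dvd_pow q (by omega)) (vq_dvd hq)
  rw [pow_one] at h1
  exact h h1

lemma vq_mul {q m : ℕ} (hq : 2 ≤ q) (hm : m ≠ 0) : vq q (q * m) = vq q m + 1 := by
  have hqm : q * m ≠ 0 := by positivity
  apply le_antisymm
  · by_contra h0
    have h2 : q ^ (vq q m + 2) ∣ q * m :=
      dvd_trans (pow_dvd_pow q (by omega)) (vq_dvd hq)
    have h3 : q * q ^ (vq q m + 1) ∣ q * m := by
      rw [← pow_succ'] ; exact h2
    have h4 : q ^ (vq q m + 1) ∣ m :=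
      (mul_dvd_mul_iff_left (by omega : q ≠ 0)).mp h3
    have := le_vq hq hm h4
    omega
  · have h5 : q * q ^ vq q m ∣ q * m := mul_dvd_mul_left q (vq_dvd hq)
    rw [← pow_succ'] at h5
    exact le_vq hq hqm h5

lemma wq_succ (q n : ℕ) : wq q (n + 1) = wq q n + vq q (n + 1) :=
  Finset.sum_range_succ _ _

lemma wq_block {q : ℕ} (hq : 2 ≤ q) (m : ℕ) : ∀ r, r < q → wq q (q * m + r) = wq q (q * m) := by
  intro r
  induction r with
  | zero => intro _; rfl
  | succ r ih =>
    intro hr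
    have hnd : ¬ q ∣ q * m + (r + 1) := by
      intro hd
      have : q ∣ r + 1 := (Nat.dvd_add_right ⟨m, rfl⟩).mp hd
      have := Nat.le_of_dvd (by omega) this
      omega
    have : q * m + (r + 1) = (q * m + r) + 1 := by omega
    rw [this, wq_succ, ← this, vq_eq_zero_of_not_dvd hq hnd, Nat.add_zero]
    exact ih (by omega)

lemma wq_mul {q : ℕ} (hq : 2 ≤ q) : ∀ m, wq q (q * m) = wq q m + m := by
  intro m
  induction m with
  | zero => simp [wq, vq]
  | succ m ih =>
    have h1 : q * (m + 1) = (q * m + (q - 1)) + 1 := by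
      have : 1 ≤ q := by omega
      cases q with
      | zero => omega
      | succ q => ring_nf; omega
    rw [h1, wq_succ, wq_block hq m (q - 1) (by omega), ih, ← h1, vq_mul hq (by omega),
      wq_succ]
    ring

lemma key {q : ℕ} (hq : 2 ≤ q) : ∀ a,
    ∑ n ∈ Finset.range (a * q), wq q n
      = q * ∑ n ∈ Finset.range a, wq q n + q * ∑ m ∈ Finset.range a, m := by
  intro a
  induction a with
  | zero => simp
  | succ a ih =>
    have h1 : (a + 1) * q = a * q + q := by ring
    rw [h1, Finset.sum_range_add, ih, Finset.sum_range_succ, Finset.sum_range_succ]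
    have h2 : ∑ r ∈ Finset.range q, wq q (a * q + r) = q * (wq q a + a) := by
      rw [Finset.sum_congr rfl (fun r hr => ?_), Finset.sum_const, Finset.card_range,
        smul_eq_mul]
      rw [Finset.mem_range] at hr
      rw [mul_comm a q] at *
      rw [wq_block hq a r hr, wq_mul hq]
    rw [h2]
    ring

theorem stmt_1 (q : ℕ) (hq : 2 ≤ q) (a : ℕ) (ha : 1 ≤ a) :
    uq q (a * q - 1) = q * uq q (a - 1) + q * ((a - 1) * a / 2) := by
  have hk := key hq a
  have h1 : a * q - 1 + 1 = a * q := by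
    have : 1 * 2 ≤ a * q := Nat.mul_le_mul ha hq
    omega
  have h2 : a - 1 + 1 = a := by omega
  have h3 : (a - 1) * a / 2 = ∑ m ∈ Finset.range a, m := by
    have hg := Finset.sum_range_id_mul_two a
    have hg2 : (a - 1) * a = (∑ m ∈ Finset.range a, m) * 2 := by rw [hg]; ring
    omega
  rw [uq, uq, h1, h2, h3, hk]
end

section
/- Let M be an n×n complex matrix such that every eigenvalue λ of M satisfies |λ| = 1 and λ ≠ 1. If v ∈ ℂ^n is a vector such that the sequence (M^k v)_{k∈ℕ} converges as k → ∞, then v = 0. -/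
theorem stmt_4 {n : ℕ} (M : Matrix (Fin n) (Fin n) ℂ)
    (hM : ∀ μ ∈ spectrum ℂ M, ‖μ‖ = 1 ∧ μ ≠ 1)
    (v : Fin n → ℂ)
    (hv : ∃ L : Fin n → ℂ,
      Filter.Tendsto (fun k : ℕ => (M ^ k).mulVec v) Filter.atTop (nhds L)) :
    v = 0 := by
  obtain ⟨L, hL⟩ := hv
  set f : (Fin n → ℂ) →ₗ[ℂ] (Fin n → ℂ) := Matrix.toLinAlgEquiv' M with hf
  have hfk : ∀ k : ℕ, (M ^ k).mulVec v = (f ^ k) v := by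
    intro k
    rw [hf, ← map_pow, Matrix.toLinAlgEquiv'_apply]
  have hL' : Filter.Tendsto (fun k : ℕ => (f ^ k) v) Filter.atTop (nhds L) := by
    simpa [hfk] using hL
  have hcont : Continuous f := f.continuous_of_finiteDimensional
  -- M L = L
  have hshift : Filter.Tendsto (fun k : ℕ => (f ^ (k + 1)) v) Filter.atTop (nhds L) :=
    hL'.comp (Filter.tendsto_add_atTop_nat 1)
  have hfL : f L = L := by
    have h1 : Filter.Tendsto (fun k : ℕ => (f ^ (k + 1)) v) Filter.atTop (nhds (f L)) := by
      have : (fun k : ℕ => (f ^ (k + 1)) v) = fun k => f ((f ^ k) v) := by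
        funext k; rw [pow_succ']; rfl
      rw [this]
      exact (hcont.tendsto L).comp hL'
    exact tendsto_nhds_unique h1 hshift
  have hspec : spectrum ℂ f = spectrum ℂ M := AlgEquiv.spectrum_eq Matrix.toLinAlgEquiv' M
  -- L = 0
  have hL0 : L = 0 := by
    by_contra h
    have : Module.End.HasEigenvalue f 1 :=
      Module.End.hasEigenvalue_of_hasEigenvector ⟨by simpa using hfL, h⟩
    have h1 : (1 : ℂ) ∈ spectrum ℂ M := by
      rw [← hspec]; exact Module.End.hasEigenvalue_iff_mem_spectrum.mp this
    exact (hM 1 h1).2 rfl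
  rw [hL0] at hL'
  -- suppose v ≠ 0
  by_contra hv0
  set W : Submodule ℂ (Fin n → ℂ) := Submodule.span ℂ (Set.range (fun k : ℕ => (f ^ k) v))
    with hW
  have hvW : v ∈ W := Submodule.subset_span ⟨0, by simp⟩
  have hWinv : ∀ x ∈ W, f x ∈ W := by
    intro x hx
    induction hx using Submodule.span_induction with
    | mem x hx =>
      obtain ⟨k, rfl⟩ := hx
      exact Submodule.subset_span ⟨k + 1, by show (f ^ (k + 1)) v = _; rw [pow_succ']; rfl⟩
    | zero => simp
    | add x y _ _ hx hy => rw [map_add]; exact W.add_mem hx hy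
    | smul c x _ hx => rw [map_smul]; exact W.smul_mem c hx
  have hWzero : ∀ x ∈ W, Filter.Tendsto (fun k : ℕ => (f ^ k) x) Filter.atTop (nhds 0) := by
    intro x hx
    induction hx using Submodule.span_induction with
    | mem x hx =>
      obtain ⟨j, rfl⟩ := hx
      have : (fun k : ℕ => (f ^ k) ((f ^ j) v)) = fun k => (f ^ (k + j)) v := by
        funext k; rw [pow_add]; rfl
      rw [this]
      exact hL'.comp (Filter.tendsto_add_atTop_nat j)
    | zero => simp only [map_zero]; exact tendsto_const_nhds
    | add x y _ _ hx hy => simpa using hx.add hy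
    | smul c x _ hx => simpa using hx.const_smul c
  haveI : Nontrivial W := nontrivial_of_ne ⟨v, hvW⟩ 0 (by simp [Subtype.ext_iff, hv0])
  obtain ⟨μ, hμ⟩ := Module.End.exists_eigenvalue (f.restrict hWinv)
  obtain ⟨u, huv⟩ := hμ.exists_hasEigenvector
  have hu : f (u : Fin n → ℂ) = μ • (u : Fin n → ℂ) := by
    have := huv.apply_eq_smul
    exact congrArg Subtype.val this
  have huE : Module.End.HasEigenvector f μ (u : Fin n → ℂ) :=
    ⟨by simpa [Module.End.mem_eigenspace_iff] using hu, by simp [Subtype.ext_iff, huv.right]⟩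
  have hμ1 : ‖μ‖ = 1 := by
    have : μ ∈ spectrum ℂ M := by
      rw [← hspec]
      exact Module.End.hasEigenvalue_iff_mem_spectrum.mp
        (Module.End.hasEigenvalue_of_hasEigenvector huE)
    exact (hM μ this).1
  have htend : Filter.Tendsto (fun k : ℕ => (f ^ k) (u : Fin n → ℂ)) Filter.atTop (nhds 0) :=
    hWzero _ u.2
  have hconst : ∀ k : ℕ, ‖(f ^ k) (u : Fin n → ℂ)‖ = ‖(u : Fin n → ℂ)‖ := by
    intro k
    rw [huE.pow_apply, norm_smul]
    simp [norm_pow, hμ1]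
  have hnorm : Filter.Tendsto (fun k : ℕ => ‖(f ^ k) (u : Fin n → ℂ)‖) Filter.atTop (nhds 0) := by
    simpa using htend.norm
  have : ‖(u : Fin n → ℂ)‖ = 0 := by
    have h2 : Filter.Tendsto (fun _ : ℕ => ‖(u : Fin n → ℂ)‖) Filter.atTop (nhds 0) :=
      (funext hconst : (fun k : ℕ => ‖(f ^ k) (u : Fin n → ℂ)‖) = _) ▸ hnorm
    exact tendsto_nhds_unique tendsto_const_nhds h2
  exact huE.right (by simpa using norm_eq_zero.mp this)
end
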